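/- Let B be a real symmetric n×n matrix with spectral decomposition B = U diag(λ) Uᵀ where U is orthogonal. Then for τ > 0, the minimizer of Z ↦ τ‖Z‖_* + (1/2)‖Z - B‖_F² over symmetric matrices Z is Z = U diag(ẑ) Uᵀ, where ẑ_i is the soft-thresholding of λ_i at level τ. -/
import Mathlib

open Matrix

section Aux

variable {n : Type*} [Fintype n] [DecidableEq n]

lemma trace_eq_sum_sq (A : Matrix n n ℝ) :
    Matrix.trace (Aᵀ * A) = ∑ i, ∑ j, (A i j) ^ 2 := by
  rw [Finset.sum_comm]
  simp [Matrix.trace, Matrix.mul_apply, Matrix.diag, sq]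

lemma frob_conj (U : Matrix n n ℝ) (hU : U * Uᵀ = 1) (hU' : Uᵀ * U = 1)
    (M : Matrix n n ℝ) :
    ∑ i, ∑ j, ((U * M * Uᵀ) i j) ^ 2 = ∑ i, ∑ j, (M i j) ^ 2 := by
  rw [← trace_eq_sum_sq, ← trace_eq_sum_sq]
  have h1 : (U * M * Uᵀ)ᵀ * (U * M * Uᵀ) = U * (Mᵀ * M) * Uᵀ := by
    calc (U * M * Uᵀ)ᵀ * (U * M * Uᵀ) = U * Mᵀ * ((Uᵀ * U) * (M * Uᵀ)) := by
          simp [Matrix.transpose_mul, Matrix.mul_assoc]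
      _ = U * (Mᵀ * M) * Uᵀ := by rw [hU']; simp [Matrix.mul_assoc]
  rw [h1, Matrix.trace_mul_cycle, ← Matrix.mul_assoc, hU', one_mul]

lemma diag_abs_le (C : Matrix n n ℝ) (hC : C * Cᵀ = 1) (μ : n → ℝ) :
    ∑ i, |(Cᵀ * Matrix.diagonal μ * C) i i| ≤ ∑ k, |μ k| := by
  have entry : ∀ i, (Cᵀ * Matrix.diagonal μ * C) i i = ∑ k, μ k * (C k i) ^ 2 := by
    intro i
    simp [Matrix.mul_apply, Matrix.diagonal_apply, Finset.mul_sum, sq]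
    apply Finset.sum_congr rfl
    intro k _
    ring
  have hrow : ∀ k, ∑ i, (C k i) ^ 2 = 1 := by
    intro k
    have := congrArg (fun A => A k k) hC
    simpa [Matrix.mul_apply, sq] using this
  calc ∑ i, |(Cᵀ * Matrix.diagonal μ * C) i i|
      ≤ ∑ i, ∑ k, |μ k| * (C k i) ^ 2 := by
        apply Finset.sum_le_sum
        intro i _
        rw [entry i]
        refine (Finset.abs_sum_le_sum_abs _ _).trans ?_
        apply Finset.sum_le_sum
        intro k _
        rw [abs_mul, abs_of_nonneg (sq_nonneg (C k i))]
    _ = ∑ k, |μ k| * ∑ i, (C k i) ^ 2 := by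
        rw [Finset.sum_comm]; simp [Finset.mul_sum]
    _ = ∑ k, |μ k| := by simp [hrow]

lemma scalar_min (τ l z : ℝ) (hτ : 0 < τ) :
    τ * |Real.sign l * max (|l| - τ) 0| +
      (1 / 2) * (Real.sign l * max (|l| - τ) 0 - l) ^ 2 ≤
    τ * |z| + (1 / 2) * (z - l) ^ 2 := by
  have hsmall : |l| ≤ τ → z * l ≤ τ * |z| := by
    intro hlt
    calc z * l ≤ |z * l| := le_abs_self _
      _ = |l| * |z| := by rw [abs_mul]; ring
      _ ≤ τ * |z| := mul_le_mul_of_nonneg_right hlt (abs_nonneg z)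
  rcases lt_trichotomy l 0 with h | h | h
  · rw [Real.sign_of_neg h, abs_of_neg h]
    rcases le_or_gt (-l - τ) 0 with h2 | h2
    · rw [max_eq_right h2]
      have h3 := hsmall (by rw [abs_of_neg h]; linarith)
      simp only [mul_zero, neg_zero, abs_zero, zero_sub]
      nlinarith [h3, sq_nonneg z]
    · rw [max_eq_left h2.le]
      have he : (-1 : ℝ) * (-l - τ) = l + τ := by ring
      rw [he, abs_of_neg (by linarith : l + τ < 0)]
      nlinarith [neg_abs_le z, sq_nonneg (z - l - τ)]
  · subst h
    simp only [Real.sign_zero, zero_mul, abs_zero, mul_zero, zero_sub, neg_zero, sub_zero]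
    nlinarith [mul_nonneg hτ.le (abs_nonneg z), sq_nonneg z]
  · rw [Real.sign_of_pos h, abs_of_pos h, one_mul]
    rcases le_or_gt (l - τ) 0 with h2 | h2
    · rw [max_eq_right h2]
      have h3 := hsmall (by rw [abs_of_pos h]; linarith)
      simp only [abs_zero, mul_zero, zero_sub]
      nlinarith [h3, sq_nonneg z]
    · rw [max_eq_left h2.le, abs_of_pos h2]
      nlinarith [le_abs_self z, sq_nonneg (z - l + τ)]

lemma sum_sq_diagonal (f : n → ℝ) :
    ∑ i, ∑ j, ((Matrix.diagonal f) i j) ^ 2 = ∑ i, (f i) ^ 2 := by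
  apply Finset.sum_congr rfl
  intro i _
  rw [Finset.sum_eq_single i]
  · simp
  · intro j _ hj
    rw [Matrix.diagonal_apply_ne f (Ne.symm hj)]
    simp
  · simp

end Aux

/-- For a real symmetric matrix `B = U diag(λ) Uᵀ` with `U` orthogonal and `τ > 0`,
the matrix `U diag(ẑ) Uᵀ`, where `ẑᵢ = sign(λᵢ)·max(|λᵢ| - τ, 0)` is the
soft-thresholding of `λᵢ`, minimizes `Z ↦ τ‖Z‖_* + (1/2)‖Z - B‖_F²` over symmetric
matrices (nuclear norm = sum of absolute values of eigenvalues). -/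
theorem stmt_4 {n : Type*} [Fintype n] [DecidableEq n]
    (B U : Matrix n n ℝ) (lam : n → ℝ)
    (hU : U * Uᵀ = 1) (hB : B = U * Matrix.diagonal lam * Uᵀ)
    (τ : ℝ) (hτ : 0 < τ)
    (zhat : n → ℝ) (hz : ∀ i, zhat i = Real.sign (lam i) * max (|lam i| - τ) 0) :
    ∀ (Z : Matrix n n ℝ) (hZ : Z.IsHermitian),
      τ * (∑ i, |zhat i|) +
        (1 / 2) * ∑ i, ∑ j, ((U * Matrix.diagonal zhat * Uᵀ) i j - B i j) ^ 2 ≤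
      τ * (∑ i, |hZ.eigenvalues i|) +
        (1 / 2) * ∑ i, ∑ j, (Z i j - B i j) ^ 2 := by
  intro Z hZ
  have hU' : Uᵀ * U = 1 := mul_eq_one_comm.mp hU
  set W : Matrix n n ℝ := Uᵀ * Z * U with hW
  -- LHS Frobenius term
  have hdiff : U * Matrix.diagonal zhat * Uᵀ - B =
      U * Matrix.diagonal (fun k => zhat k - lam k) * Uᵀ := by
    rw [hB, ← Matrix.diagonal_sub, Matrix.mul_sub, Matrix.sub_mul]
  have hLHS : ∑ i, ∑ j, ((U * Matrix.diagonal zhat * Uᵀ) i j - B i j) ^ 2 =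
      ∑ i, (zhat i - lam i) ^ 2 := by
    have : ∀ i j, (U * Matrix.diagonal zhat * Uᵀ) i j - B i j =
        (U * Matrix.diagonal (fun k => zhat k - lam k) * Uᵀ) i j := by
      intro i j
      rw [← hdiff]
      simp [Matrix.sub_apply]
    simp_rw [this]
    rw [frob_conj U hU hU', sum_sq_diagonal]
  -- RHS Frobenius term
  have hZW : Z = U * W * Uᵀ := by
    rw [hW]
    calc Z = (U * Uᵀ) * Z * (U * Uᵀ) := by rw [hU]; simp
      _ = U * (Uᵀ * Z * U) * Uᵀ := by simp [Matrix.mul_assoc]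
  have hRHSfrob : ∑ i, ∑ j, (Z i j - B i j) ^ 2 =
      ∑ i, ∑ j, ((W - Matrix.diagonal lam) i j) ^ 2 := by
    have hd : ∀ i j, Z i j - B i j =
        (U * (W - Matrix.diagonal lam) * Uᵀ) i j := by
      intro i j
      have : U * (W - Matrix.diagonal lam) * Uᵀ = Z - B := by
        rw [Matrix.mul_sub, Matrix.sub_mul, ← hZW, ← hB]
      rw [this]
      simp [Matrix.sub_apply]
    simp_rw [hd]
    rw [frob_conj U hU hU']
  have hfrob_ge : ∑ i, (W i i - lam i) ^ 2 ≤
      ∑ i, ∑ j, ((W - Matrix.diagonal lam) i j) ^ 2 := by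
    have h1 : ∀ i, (W i i - lam i) ^ 2 ≤ ∑ j, ((W - Matrix.diagonal lam) i j) ^ 2 := by
      intro i
      have he : (W i i - lam i) ^ 2 = ((W - Matrix.diagonal lam) i i) ^ 2 := by
        simp [Matrix.sub_apply]
      rw [he]
      exact Finset.single_le_sum (fun j _ => sq_nonneg ((W - Matrix.diagonal lam) i j))
        (Finset.mem_univ i)
    exact Finset.sum_le_sum fun i _ => h1 i
  -- nuclear norm bound
  set V : Matrix n n ℝ := (hZ.eigenvectorUnitary : Matrix n n ℝ) with hVdef
  have hVmem := hZ.eigenvectorUnitary.2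
  have hV : V * Vᵀ = 1 := by
    have := (Matrix.mem_unitaryGroup_iff).mp hVmem
    simpa [Matrix.star_eq_conjTranspose, Matrix.conjTranspose_eq_transpose_of_trivial] using this
  have hV' : Vᵀ * V = 1 := mul_eq_one_comm.mp hV
  have hspec : Z = V * Matrix.diagonal hZ.eigenvalues * Vᵀ := by
    have := hZ.spectral_theorem
    simpa [Matrix.star_eq_conjTranspose, Matrix.conjTranspose_eq_transpose_of_trivial,
      Function.comp] using this
  set C : Matrix n n ℝ := Vᵀ * U with hCdef
  have hC : C * Cᵀ = 1 := by
    rw [hCdef]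
    calc Vᵀ * U * (Vᵀ * U)ᵀ = Vᵀ * (U * Uᵀ) * V := by
          simp [Matrix.transpose_mul, Matrix.mul_assoc]
      _ = 1 := by rw [hU]; simpa using hV'
  have hWC : W = Cᵀ * Matrix.diagonal hZ.eigenvalues * C := by
    rw [hW, hCdef]
    conv_lhs => rw [hspec]
    simp [Matrix.transpose_mul, Matrix.mul_assoc]
  have hnuc : ∑ i, |W i i| ≤ ∑ i, |hZ.eigenvalues i| := by
    rw [hWC]
    exact diag_abs_le C hC hZ.eigenvalues
  -- combine
  rw [hLHS, hRHSfrob]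
  have key : τ * (∑ i, |zhat i|) + (1 / 2) * ∑ i, (zhat i - lam i) ^ 2 ≤
      τ * (∑ i, |W i i|) + (1 / 2) * ∑ i, (W i i - lam i) ^ 2 := by
    have hsum : ∑ i, (τ * |zhat i| + (1 / 2) * (zhat i - lam i) ^ 2) ≤
        ∑ i, (τ * |W i i| + (1 / 2) * (W i i - lam i) ^ 2) :=
      Finset.sum_le_sum fun i _ => by rw [hz i]; exact scalar_min τ (lam i) (W i i) hτ
    rw [Finset.sum_add_distrib, Finset.sum_add_distrib, ← Finset.mul_sum, ← Finset.mul_sum,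
      ← Finset.mul_sum, ← Finset.mul_sum] at hsum
    exact hsum
  calc τ * (∑ i, |zhat i|) + (1 / 2) * ∑ i, (zhat i - lam i) ^ 2
      ≤ τ * (∑ i, |W i i|) + (1 / 2) * ∑ i, (W i i - lam i) ^ 2 := key
    _ ≤ τ * (∑ i, |hZ.eigenvalues i|) +
        (1 / 2) * ∑ i, ∑ j, ((W - Matrix.diagonal lam) i j) ^ 2 := by
        gcongr
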